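/- arXiv:1609.07887 — 2 statements merged into one kernel-verified Lean document; each statement's English description precedes it below -/
import Mathlib

section
/- Different choices of the ilr basis are orthogonal rotations of each other: if z and z~ are the ilr coordinate vectors of the same composition x with respect to two permutations of the parts, then there exists an orthogonal (D-1)×(D-1) matrix R, depending only on the permutations, with z~ = R z for all positive x. -/
open Matrix Finset

/-- Scaling coefficient of the i-th ilr coordinate. -/
noncomputable def ilrCoef (n : ℕ) (i : Fin n) : ℝ :=
  Real.sqrt (((n : ℝ) - i) / ((n : ℝ) - i + 1))

/-- The contrast matrix whose rows are the ilr basis (identity permutation). -/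
noncomputable def ilrV (n : ℕ) : Matrix (Fin n) (Fin (n + 1)) ℝ :=
  Matrix.of fun i j =>
    ilrCoef n i *
      (if j = i.castSucc then 1 else if i.castSucc < j then -(1 / ((n : ℝ) - i)) else 0)

lemma ilr_sub_pos (n : ℕ) (i : Fin n) : 0 < (n : ℝ) - i := by
  have : (i : ℝ) < n := by exact_mod_cast i.isLt
  linarith

lemma ilrCoef_sq (n : ℕ) (i : Fin n) :
    ilrCoef n i * ilrCoef n i = ((n : ℝ) - i) / ((n : ℝ) - i + 1) := by
  have h := ilr_sub_pos n i
  exact Real.mul_self_sqrt (by positivity)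

/-- Row i of `ilrV` paired against any vector f. -/
lemma ilrV_row_dot (n : ℕ) (i : Fin n) (f : Fin (n + 1) → ℝ) :
    ∑ j, ilrV n i j * f j =
      ilrCoef n i *
        (f i.castSucc - (1 / ((n : ℝ) - i)) * ∑ j ∈ Ioi i.castSucc, f j) := by
  have h0 : ∀ j ∈ (univ : Finset (Fin (n + 1))), j ∉ Ici i.castSucc →
      ilrV n i j * f j = 0 := by
    intro j _ hj
    simp only [mem_Ici, not_le] at hj
    simp [ilrV, hj.ne, not_lt.mpr hj.le]
  rw [← Finset.sum_subset (Finset.subset_univ _) h0, ← Finset.Ioi_insert,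
    Finset.sum_insert (by simp)]
  have h1 : ∀ j ∈ Ioi i.castSucc,
      ilrV n i j * f j = (ilrCoef n i * (-(1 / ((n : ℝ) - i)))) * f j := by
    intro j hj
    rw [mem_Ioi] at hj
    simp [ilrV, hj, hj.ne']
  rw [Finset.sum_congr rfl h1, ← Finset.mul_sum]
  simp [ilrV]
  ring

lemma ilrV_row_sum (n : ℕ) (i : Fin n) : ∑ j, ilrV n i j = 0 := by
  have := ilrV_row_dot n i (fun _ => 1)
  simp only [mul_one] at this
  rw [this]
  have hcard : ((Ioi i.castSucc).card : ℝ) = (n : ℝ) - i := by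
    rw [Fin.card_Ioi]
    have h1 : n + 1 - 1 - (i.castSucc : ℕ) = n - (i : ℕ) := by
      simp [Fin.coe_castSucc]
    rw [h1, Nat.cast_sub i.isLt.le]
  rw [Finset.sum_const, nsmul_eq_mul, hcard]
  have h := ilr_sub_pos n i
  field_simp
  simp

/-- Rows of `ilrV` are orthonormal. -/
lemma ilrV_VVT (n : ℕ) (i i' : Fin n) :
    ∑ j, ilrV n i j * ilrV n i' j = if i = i' then 1 else 0 := by
  have aux : ∀ i i' : Fin n, i < i' → ∑ j, ilrV n i j * ilrV n i' j = 0 := by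
    intro i i' hii
    rw [ilrV_row_dot n i (fun j => ilrV n i' j)]
    have hc : i.castSucc < i'.castSucc := by exact_mod_cast hii
    have hz : ilrV n i' i.castSucc = 0 := by
      simp [ilrV, hc.ne, asymm hc]
    have hsum : ∑ j ∈ Ioi i.castSucc, ilrV n i' j = ∑ j, ilrV n i' j := by
      apply Finset.sum_subset (Finset.subset_univ _)
      intro j _ hj
      rw [mem_Ioi, not_lt] at hj
      have hji : j < i'.castSucc := lt_of_le_of_lt hj hc
      simp [ilrV, hji.ne, not_lt.mpr hji.le]
    rw [hz, hsum, ilrV_row_sum]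
    ring
  rcases lt_trichotomy i i' with h | h | h
  · rw [aux i i' h, if_neg h.ne]
  · subst h
    rw [if_pos rfl, ilrV_row_dot n i (fun j => ilrV n i j)]
    have hdiag : ilrV n i i.castSucc = ilrCoef n i := by simp [ilrV]
    have hsum : ∑ j ∈ Ioi i.castSucc, ilrV n i j
        = ((n : ℝ) - i) * (ilrCoef n i * (-(1 / ((n : ℝ) - i)))) := by
      rw [Finset.sum_congr rfl (fun j hj => ?_), Finset.sum_const, nsmul_eq_mul]
      · congr 1
        rw [Fin.card_Ioi]
        have h1 : n + 1 - 1 - (i.castSucc : ℕ) = n - (i : ℕ) := by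
          simp [Fin.coe_castSucc]
        rw [h1, Nat.cast_sub i.isLt.le]
      · rw [mem_Ioi] at hj
        simp [ilrV, hj, hj.ne']
    rw [hdiag, hsum]
    have h := ilr_sub_pos n i
    have haux : ilrCoef n i * ilrCoef n i * ((n : ℝ) - i + 1) = (n : ℝ) - i := by
      rw [ilrCoef_sq]
      field_simp
    field_simp
    linear_combination haux
  · rw [if_neg h.ne', ← aux i' i h]
    exact Finset.sum_congr rfl fun j _ => mul_comm _ _

/-- The ilr coordinates of x with respect to a permutation σ of the parts
(D = n+1, coordinate index i : Fin n). -/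
noncomputable def ilrPerm (n : ℕ) (σ : Equiv.Perm (Fin (n + 1)))
    (x : Fin (n + 1) → ℝ) (i : Fin n) : ℝ :=
  Real.sqrt (((n : ℝ) - i) / ((n : ℝ) - i + 1)) *
    Real.log (x (σ i.castSucc) /
      (∏ j ∈ Finset.Ioi i.castSucc, x (σ j)) ^ (1 / ((n : ℝ) - i)))


/-- `ilrV` extended by the constant unit row: a square orthogonal matrix. -/
noncomputable def ilrW (n : ℕ) : Matrix (Fin (n + 1)) (Fin (n + 1)) ℝ :=
  Matrix.of fun k j =>
    if h : (k : ℕ) < n then ilrV n ⟨k, h⟩ j else Real.sqrt (((n : ℝ) + 1)⁻¹)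

lemma ilrW_mul_transpose (n : ℕ) : ilrW n * (ilrW n)ᵀ = 1 := by
  ext k k'
  rw [mul_apply]
  simp only [transpose_apply]
  by_cases hk : (k : ℕ) < n <;> by_cases hk' : (k' : ℕ) < n
  · have : ∀ j, ilrW n k j * ilrW n k' j = ilrV n ⟨k, hk⟩ j * ilrV n ⟨k', hk'⟩ j := by
      intro j; simp [ilrW, hk, hk']
    rw [Finset.sum_congr rfl fun j _ => this j, ilrV_VVT]
    by_cases h : k = k'
    · subst h
      rw [if_pos rfl, one_apply_eq]
    · have h2 : (⟨(k : ℕ), hk⟩ : Fin n) ≠ ⟨k', hk'⟩ := by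
        simp only [ne_eq, Fin.mk.injEq]
        exact fun hc => h (Fin.ext hc)
      rw [if_neg h2, one_apply_ne h]
  · have hne : k ≠ k' := fun hc => hk' (hc ▸ hk)
    have : ∀ j, ilrW n k j * ilrW n k' j
        = ilrV n ⟨k, hk⟩ j * Real.sqrt (((n : ℝ) + 1)⁻¹) := by
      intro j; simp [ilrW, hk, hk']
    rw [Finset.sum_congr rfl fun j _ => this j, ← Finset.sum_mul, ilrV_row_sum,
      zero_mul, one_apply_ne hne]
  · have hne : k ≠ k' := fun hc => hk (hc ▸ hk')
    have : ∀ j, ilrW n k j * ilrW n k' j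
        = Real.sqrt (((n : ℝ) + 1)⁻¹) * ilrV n ⟨k', hk'⟩ j := by
      intro j; simp [ilrW, hk, hk']
    rw [Finset.sum_congr rfl fun j _ => this j, ← Finset.mul_sum, ilrV_row_sum,
      mul_zero, one_apply_ne hne]
  · have hkk : k = k' := by
      have h1 : (k : ℕ) = n := by omega
      have h2 : (k' : ℕ) = n := by omega
      exact Fin.ext (h1.trans h2.symm)
    have : ∀ j, ilrW n k j * ilrW n k' j = ((n : ℝ) + 1)⁻¹ := by
      intro j
      simp only [ilrW, Matrix.of_apply, dif_neg hk, dif_neg hk']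
      exact Real.mul_self_sqrt (by positivity)
    rw [Finset.sum_congr rfl fun j _ => this j, Finset.sum_const, nsmul_eq_mul]
    subst hkk
    rw [one_apply_eq]
    simp only [Finset.card_univ, Fintype.card_fin, Nat.cast_add, Nat.cast_one]
    have : ((n : ℝ) + 1) ≠ 0 := by positivity
    field_simp

lemma ilrV_VTV (n : ℕ) (j j' : Fin (n + 1)) :
    ∑ i, ilrV n i j * ilrV n i j' = (if j = j' then 1 else 0) - ((n : ℝ) + 1)⁻¹ := by
  have h1 : (ilrW n)ᵀ * ilrW n = 1 := mul_eq_one_comm.mp (ilrW_mul_transpose n)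
  have h2 := congrFun (congrFun h1 j) j'
  rw [mul_apply] at h2
  simp only [transpose_apply] at h2
  rw [Fin.sum_univ_castSucc] at h2
  have h3 : ∀ i : Fin n, ilrW n i.castSucc j * ilrW n i.castSucc j'
      = ilrV n i j * ilrV n i j' := by
    intro i
    have hi : ((i.castSucc : Fin (n + 1)) : ℕ) < n := by simp [Fin.coe_castSucc, i.isLt]
    simp [ilrW, hi]
  have h4 : ilrW n (Fin.last n) j * ilrW n (Fin.last n) j' = ((n : ℝ) + 1)⁻¹ := by
    have : ¬ ((Fin.last n : Fin (n + 1)) : ℕ) < n := by simp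
    simp only [ilrW, Matrix.of_apply, dif_neg this]
    exact Real.mul_self_sqrt (by positivity)
  rw [Finset.sum_congr rfl fun i _ => h3 i, h4] at h2
  have h5 : (1 : Matrix (Fin (n+1)) (Fin (n+1)) ℝ) j j' = if j = j' then 1 else 0 :=
    Matrix.one_apply
  rw [h5] at h2
  linarith

/-- The ilr contrast matrix for the permutation σ. -/
noncomputable def ilrM (n : ℕ) (σ : Equiv.Perm (Fin (n + 1))) :
    Matrix (Fin n) (Fin (n + 1)) ℝ :=
  Matrix.of fun i k => ilrV n i (σ⁻¹ k)

/-- The all-ones (n+1)×(n+1) matrix. -/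
def ilrJ (n : ℕ) : Matrix (Fin (n + 1)) (Fin (n + 1)) ℝ := Matrix.of fun _ _ => 1

lemma ilrM_mul_transpose (n : ℕ) (σ : Equiv.Perm (Fin (n + 1))) :
    ilrM n σ * (ilrM n σ)ᵀ = 1 := by
  ext i i'
  rw [mul_apply]
  simp only [transpose_apply, ilrM, Matrix.of_apply]
  rw [Equiv.sum_comp σ⁻¹ (fun j => ilrV n i j * ilrV n i' j), ilrV_VVT]
  exact (Matrix.one_apply).symm

lemma ilrM_transpose_mul (n : ℕ) (σ : Equiv.Perm (Fin (n + 1))) :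
    (ilrM n σ)ᵀ * ilrM n σ = 1 - ((n : ℝ) + 1)⁻¹ • ilrJ n := by
  ext k k'
  rw [mul_apply]
  simp only [transpose_apply, ilrM, Matrix.of_apply]
  rw [ilrV_VTV]
  have : σ⁻¹ k = σ⁻¹ k' ↔ k = k' := Equiv.apply_eq_iff_eq _
  simp only [Matrix.sub_apply, Matrix.smul_apply, ilrJ, Matrix.of_apply, smul_eq_mul,
    mul_one, Matrix.one_apply, this]

lemma ilrM_mul_J (n : ℕ) (σ : Equiv.Perm (Fin (n + 1))) :
    ilrM n σ * ilrJ n = 0 := by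
  ext i k
  rw [mul_apply]
  simp only [ilrM, ilrJ, Matrix.of_apply, mul_one]
  rw [Equiv.sum_comp σ⁻¹ (fun j => ilrV n i j), ilrV_row_sum]
  rfl

lemma ilrJ_mul_Mt (n : ℕ) (σ : Equiv.Perm (Fin (n + 1))) :
    ilrJ n * (ilrM n σ)ᵀ = 0 := by
  have h : (ilrM n σ * ilrJ n)ᵀ = 0 := by rw [ilrM_mul_J]; exact Matrix.transpose_zero
  rw [Matrix.transpose_mul] at h
  have hJ : (ilrJ n)ᵀ = ilrJ n := rfl
  rwa [hJ] at h

lemma ilrPerm_eq_mulVec (n : ℕ) (σ : Equiv.Perm (Fin (n + 1)))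
    (x : Fin (n + 1) → ℝ) (hx : ∀ j, 0 < x j) :
    (fun i => ilrPerm n σ x i) = ilrM n σ *ᵥ (fun k => Real.log (x k)) := by
  funext i
  have hs := ilr_sub_pos n i
  have hswap : (ilrM n σ *ᵥ fun k => Real.log (x k)) i
      = ∑ j, ilrV n i j * Real.log (x (σ j)) := by
    rw [mulVec, dotProduct]
    simp only [ilrM, Matrix.of_apply]
    exact (Fintype.sum_equiv σ (fun j => ilrV n i j * Real.log (x (σ j)))
      (fun k => ilrV n i (σ⁻¹ k) * Real.log (x k))
      (fun j => by simp)).symm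
  rw [hswap, ilrV_row_dot]
  unfold ilrPerm ilrCoef
  congr 1
  have hprod : 0 < ∏ j ∈ Ioi i.castSucc, x (σ j) := Finset.prod_pos fun j _ => hx _
  rw [Real.log_div (ne_of_gt (hx _)) (ne_of_gt (Real.rpow_pos_of_pos hprod _)),
    Real.log_rpow hprod, Real.log_prod (fun j _ => (hx (σ j)).ne'),
    one_div]


/-- Different choices of the ilr basis (given by permutations of the parts) are
orthogonal rotations of each other: there is an orthogonal (D-1)×(D-1) matrix R,
depending only on the permutations, with z^τ = R z^σ for every positive x. -/
theorem ilr_bases_orthogonal_rotation (n : ℕ) (hn : 1 ≤ n)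
    (σ τ : Equiv.Perm (Fin (n + 1))) :
    ∃ R : Matrix (Fin n) (Fin n) ℝ, Rᵀ * R = 1 ∧
      ∀ x : Fin (n + 1) → ℝ, (∀ j, 0 < x j) →
        (fun i => ilrPerm n τ x i) = R *ᵥ (fun i => ilrPerm n σ x i) := by
  refine ⟨ilrM n τ * (ilrM n σ)ᵀ, ?_, ?_⟩
  · have key : (ilrM n τ)ᵀ * ilrM n τ * (ilrM n σ)ᵀ = (ilrM n σ)ᵀ := by
      rw [ilrM_transpose_mul, Matrix.sub_mul, Matrix.one_mul, Matrix.smul_mul,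
        ilrJ_mul_Mt, smul_zero, sub_zero]
    rw [Matrix.transpose_mul, Matrix.transpose_transpose, Matrix.mul_assoc,
      ← Matrix.mul_assoc ((ilrM n τ)ᵀ), key, ilrM_mul_transpose]
  · intro x hx
    have hRM : ilrM n τ * (ilrM n σ)ᵀ * ilrM n σ = ilrM n τ := by
      rw [Matrix.mul_assoc, ilrM_transpose_mul, Matrix.mul_sub, Matrix.mul_one,
        Matrix.mul_smul, ilrM_mul_J, smul_zero, sub_zero]
    rw [ilrPerm_eq_mulVec n σ x hx, ilrPerm_eq_mulVec n τ x hx,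
      Matrix.mulVec_mulVec, hRM]
end

section
/- The Euclidean norm of the ilr coordinate vector of x equals the norm of the clr vector: ∑_{i=1}^{D-1} z_i² = ∑_{j=1}^D (ln(x_j) − (1/D)∑_{k=1}^D ln(x_k))². -/
lemma Ioi_zero_eq' (m : ℕ) :
    Finset.Ioi (0 : Fin (m+1)) = Finset.univ.map ⟨Fin.succ, Fin.succ_injective m⟩ := by
  ext j
  simp only [Finset.mem_Ioi, Finset.mem_map, Function.Embedding.coeFn_mk, Finset.mem_univ,
    true_and]
  constructor
  · intro h
    have hj : j ≠ 0 := Fin.pos_iff_ne_zero.mp h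
    exact ⟨j.pred hj, Fin.succ_pred j hj⟩
  · rintro ⟨k, rfl⟩; exact Fin.succ_pos k

lemma Ioi_succ_eq' {m : ℕ} (a : Fin m) :
    Finset.Ioi a.succ = (Finset.Ioi a).map ⟨Fin.succ, Fin.succ_injective m⟩ := by
  ext j
  simp only [Finset.mem_Ioi, Finset.mem_map, Function.Embedding.coeFn_mk]
  constructor
  · intro h
    have hj : j ≠ 0 := Fin.pos_iff_ne_zero.mp (lt_of_le_of_lt (Fin.zero_le _) h)
    refine ⟨j.pred hj, ?_, Fin.succ_pred j hj⟩
    rw [← Fin.succ_lt_succ_iff, Fin.succ_pred]; exact h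
  · rintro ⟨k, hk, rfl⟩; exact Fin.succ_lt_succ_iff.mpr hk

lemma key_ilr (n : ℕ) (y : Fin (n+1) → ℝ) :
    ∑ i : Fin n, ((n:ℝ)-i)/((n:ℝ)-i+1) *
      (y i.castSucc - (1/((n:ℝ)-i)) * ∑ j ∈ Finset.Ioi i.castSucc, y j)^2
    = ∑ j, (y j - (1/((n:ℝ)+1)) * ∑ k, y k)^2 := by
  induction n with
  | zero => simp
  | succ n ih =>
    rw [Fin.sum_univ_succ]
    have hsucc : ∀ i : Fin n,
        ((n:ℝ)+1-(i.succ:Fin (n+1))) / ((n:ℝ)+1-(i.succ:Fin (n+1))+1) *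
          (y (i.succ).castSucc - (1/((n:ℝ)+1-(i.succ:Fin (n+1)))) *
            ∑ j ∈ Finset.Ioi (i.succ).castSucc, y j)^2
        = ((n:ℝ)-i)/((n:ℝ)-i+1) *
          ((fun j => y j.succ) i.castSucc - (1/((n:ℝ)-i)) *
            ∑ j ∈ Finset.Ioi i.castSucc, (fun j => y j.succ) j)^2 := by
      intro i
      have h1 : ((n:ℝ)+1-(i.succ:Fin (n+1))) = (n:ℝ) - i := by
        push_cast [Fin.val_succ]; ring
      have h2 : (i.succ).castSucc = (i.castSucc).succ := (Fin.succ_castSucc i).symm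
      have h3 : ∑ j ∈ Finset.Ioi (i.castSucc).succ, y j
          = ∑ j ∈ Finset.Ioi i.castSucc, y j.succ := by
        rw [Ioi_succ_eq', Finset.sum_map]; rfl
      rw [h1, h2, h3]
    push_cast
    rw [Finset.sum_congr rfl (fun i (_ : i ∈ Finset.univ) => hsucc i),
      ih (fun j => y j.succ)]
    rw [show (Fin.castSucc 0 : Fin (n+2)) = 0 from rfl, Ioi_zero_eq', Finset.sum_map,
      Fin.sum_univ_succ (f := fun j => (y j - 1/((n:ℝ)+1+1) * ∑ k : Fin (n+2), y k)^2),
      Fin.sum_univ_succ (f := y)]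
    have hne : ((n:ℝ)+1) ≠ 0 := by positivity
    have hne2 : ((n:ℝ)+1+1) ≠ 0 := by positivity
    set a := y 0 with ha
    set S := ∑ j : Fin (n+1), y j.succ with hS
    have expand : ∀ c : ℝ, ∑ j : Fin (n+1), (y j.succ - c)^2
        = (∑ j : Fin (n+1), (y j.succ)^2) - 2*c*S + ((n:ℝ)+1)*c^2 := by
      intro c
      simp only [sub_sq]
      rw [Finset.sum_add_distrib, Finset.sum_sub_distrib, Finset.sum_const,
        Finset.card_univ, Fintype.card_fin]
      have h4 : ∑ j : Fin (n+1), 2 * y j.succ * c = 2*c*S := by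
        rw [hS, Finset.mul_sum]
        exact Finset.sum_congr rfl fun j _ => by ring
      rw [h4]; ring
    have e1 := expand (1/((n:ℝ)+1) * S)
    have e2 := expand (1/((n:ℝ)+1+1) * (a + S))
    simp only [Function.Embedding.coeFn_mk] at *
    rw [e1, e2]
    simp only [Fin.val_zero, Nat.cast_zero, sub_zero, ← hS]
    field_simp
    ring

/-- The i-th ilr coordinate of a positive D-part composition (D = n+1). -/
noncomputable def ilr (n : ℕ) (x : Fin (n + 1) → ℝ) (i : Fin n) : ℝ :=
  Real.sqrt (((n : ℝ) - i) / ((n : ℝ) - i + 1)) *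
    Real.log (x i.castSucc /
      (∏ j ∈ Finset.Ioi i.castSucc, x j) ^ (1 / ((n : ℝ) - i)))

/-- The squared Euclidean norm of the ilr coordinate vector equals that of the
clr vector: ∑ᵢ zᵢ² = ∑ⱼ (ln xⱼ − (1/D) ∑ₖ ln xₖ)². -/
theorem ilr_norm_eq_clr_norm (n : ℕ) (hn : 1 ≤ n) (x : Fin (n + 1) → ℝ)
    (hx : ∀ j, 0 < x j) :
    ∑ i : Fin n, (ilr n x i) ^ 2 =
      ∑ j : Fin (n + 1),
        (Real.log (x j) - (1 / ((n : ℝ) + 1)) * ∑ k, Real.log (x k)) ^ 2 := by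
  have hterm : ∀ i : Fin n, (ilr n x i)^2
      = ((n:ℝ)-i)/((n:ℝ)-i+1) *
        (Real.log (x i.castSucc) - (1/((n:ℝ)-i)) *
          ∑ j ∈ Finset.Ioi i.castSucc, Real.log (x j))^2 := by
    intro i
    have hi : (0:ℝ) < (n:ℝ) - i := by
      have := i.is_lt
      have : (i:ℝ) < n := by exact_mod_cast this
      linarith
    have hP : 0 < ∏ j ∈ Finset.Ioi i.castSucc, x j :=
      Finset.prod_pos fun j _ => hx j
    have hc : (0:ℝ) ≤ ((n:ℝ)-i)/((n:ℝ)-i+1) := by positivity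
    rw [ilr, mul_pow, Real.sq_sqrt hc]
    congr 1
    rw [Real.log_div (hx _).ne' (Real.rpow_pos_of_pos hP _).ne',
      Real.log_rpow hP, Real.log_prod fun j _ => (hx j).ne']
  calc ∑ i : Fin n, (ilr n x i)^2
      = ∑ i : Fin n, ((n:ℝ)-i)/((n:ℝ)-i+1) *
        (Real.log (x i.castSucc) - (1/((n:ℝ)-i)) *
          ∑ j ∈ Finset.Ioi i.castSucc, Real.log (x j))^2 :=
        Finset.sum_congr rfl fun i _ => hterm i
    _ = _ := key_ilr n fun j => Real.log (x j)
end
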